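/- arXiv:1504.04539 — 4 statements merged into one kernel-verified Lean document; each statement's English description precedes it below -/
import Mathlib

section
/- Cauchy-theorem step of the vanishing lemma: Let s > 1, C > 0, let F ⊂ ℝ be a finite set, and let H be a ℂ^{2×2}-valued function that is analytic on the open upper half-plane {Im z > 0}, extends continuously to {Im z ≥ 0}∖F, satisfies ‖H(z)‖ ≤ C(1+|z|)^{−s} for all z with Im z ≥ 0, z ∉ F, and satisfies ‖H(z)‖ = O(|log|z−a||) as z → a for each a ∈ F. Then the (entrywise) integral over ℝ of the boundary values of H vanishes: ∫_ℝ H₊(x) dx = 0. -/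
open Complex Filter Topology MeasureTheory

noncomputable section

abbrev M2 : Type := Matrix (Fin 2) (Fin 2) ℂ

set_option maxHeartbeats 1000000 in
open Set in
lemma cauchy_step_key (s C : ℝ) (hs : 1 < s) (hC : 0 < C) (F : Set ℝ) (hF : F.Finite)
    (f : ℂ → ℂ)
    (hanal : DifferentiableOn ℂ f {z : ℂ | 0 < z.im})
    (hcont : ContinuousOn f ({z : ℂ | 0 ≤ z.im} \ ((fun x : ℝ => (x : ℂ)) '' F)))
    (hbound : ∀ z : ℂ, 0 ≤ z.im → z ∉ (fun x : ℝ => (x : ℂ)) '' F →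
      ‖f z‖ ≤ C * (1 + ‖z‖) ^ (-s)) :
    ∫ x : ℝ, f (x : ℂ) = 0 := by
  set E : Set ℂ := (fun x : ℝ => (x : ℂ)) '' F with hE
  set t : ℝ := (1 + s) / 2 with htdef
  have ht1 : 1 < t := by simp only [htdef]; linarith
  have hts : t < s := by simp only [htdef]; linarith
  have ht0 : 0 ≤ t := by linarith
  have hnE : ∀ z : ℂ, 0 < z.im → z ∉ E := by
    rintro z hz ⟨y, -, rfl⟩; simp at hz
  have hg : ∀ r : ℝ, 1 < r → Integrable (fun x : ℝ => (1 + |x|) ^ (-r)) := by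
    intro r hr
    have := integrable_one_add_norm (E := ℝ) (μ := volume) (r := r) (by simpa using hr)
    simpa [Real.norm_eq_abs] using this
  have hbd1 : ∀ z : ℂ, 0 ≤ z.im → z ∉ E → ‖f z‖ ≤ C * (1 + |z.re|) ^ (-s) := by
    intro z hz hzE
    refine (hbound z hz hzE).trans ?_
    have hre : 1 + |z.re| ≤ 1 + ‖z‖ := by
      have := Complex.abs_re_le_norm z; linarith
    exact mul_le_mul_of_nonneg_left
      (Real.rpow_le_rpow_of_nonpos (by positivity) hre (by linarith)) hC.le
  have hbd2 : ∀ z : ℂ, 0 ≤ z.im → z ∉ E →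
      ‖f z‖ ≤ (C * (1 + z.im) ^ (-(s - t))) * (1 + |z.re|) ^ (-t) := by
    intro z hz hzE
    have hb0 : (0:ℝ) < 1 + ‖z‖ := by positivity
    have hre : 1 + |z.re| ≤ 1 + ‖z‖ := by
      have := Complex.abs_re_le_norm z; linarith
    have him : 1 + z.im ≤ 1 + ‖z‖ := by
      have h1 := Complex.abs_im_le_norm z
      have h2 : z.im ≤ |z.im| := le_abs_self _
      linarith
    calc ‖f z‖ ≤ C * (1 + ‖z‖) ^ (-s) := hbound z hz hzE
      _ = C * ((1 + ‖z‖) ^ (-(s - t)) * (1 + ‖z‖) ^ (-t)) := by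
          rw [← Real.rpow_add hb0]; ring_nf
      _ ≤ C * ((1 + z.im) ^ (-(s - t)) * (1 + |z.re|) ^ (-t)) := by
          refine mul_le_mul_of_nonneg_left (mul_le_mul
            (Real.rpow_le_rpow_of_nonpos (by positivity) him (by linarith))
            (Real.rpow_le_rpow_of_nonpos (by positivity) hre (by linarith))
            (Real.rpow_nonneg (by positivity) _)
            (Real.rpow_nonneg (by positivity) _)) hC.le
      _ = (C * (1 + z.im) ^ (-(s - t))) * (1 + |z.re|) ^ (-t) := by ring
  have hms : ∀ ε : ℝ, 0 < ε → Continuous (fun x : ℝ => f ((x:ℂ) + ε * I)) := by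
    intro ε hε
    refine hanal.continuousOn.comp_continuous (by continuity) fun x => ?_
    show 0 < ((x:ℂ) + ε * I).im
    simpa using hε
  have hmemE : ∀ (x ε : ℝ), 0 < ε → ((x:ℂ) + ε * I) ∉ E := by
    intro x ε hε
    apply hnE; simpa using hε
  have hFnull : ∀ᵐ x : ℝ, x ∉ F := by
    rw [MeasureTheory.ae_iff]
    simpa using hF.countable.measure_zero volume
  have hcoe : ∀ x : ℝ, x ∉ F → ((x:ℂ)) ∈ ({z : ℂ | 0 ≤ z.im} \ E) := by
    intro x hx
    refine ⟨by simp, ?_⟩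
    rintro ⟨y, hy, hyx⟩
    rw [Complex.ofReal_inj] at hyx
    exact hx (hyx ▸ hy)
  have hm0 : AEStronglyMeasurable (fun x : ℝ => f (x : ℂ)) volume := by
    have hFm : MeasurableSet (Fᶜ) := hF.measurableSet.compl
    have hco : ContinuousOn (fun x : ℝ => f (x : ℂ)) Fᶜ := by
      intro x hx
      exact (hcont _ (hcoe x hx)).comp Complex.continuous_ofReal.continuousWithinAt
        fun y hy => hcoe y hy
    have h := hco.aestronglyMeasurable (μ := volume) hFm
    have e : volume.restrict (Fᶜ) = volume :=
      Measure.restrict_eq_self_of_ae_mem (s := Fᶜ) (hFnull.mono fun x hx => hx)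
    rwa [e] at h
  have hint : ∀ ε : ℝ, 0 ≤ ε → Integrable (fun x : ℝ => f ((x:ℂ) + ε * I)) := by
    intro ε hε
    have hae : ∀ᵐ x : ℝ, ‖f ((x:ℂ) + ε * I)‖ ≤ C * (1 + |x|) ^ (-s) := by
      rcases hε.eq_or_lt with rfl | hε'
      · filter_upwards [hFnull] with x hx
        have h := hbd1 ((x:ℂ) + (0:ℝ) * I) (by simp) (by simpa using (hcoe x hx).2)
        simpa using h
      · refine .of_forall fun x => ?_
        have h := hbd1 ((x:ℂ) + ε * I) (by simpa using hε'.le) (hmemE x ε hε')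
        simpa using h
    have hmea : AEStronglyMeasurable (fun x : ℝ => f ((x:ℂ) + ε * I)) volume := by
      rcases hε.eq_or_lt with rfl | hε'
      · simpa using hm0
      · exact (hms ε hε').aestronglyMeasurable
    exact Integrable.mono' ((hg s hs).const_mul C) hmea hae
  set A : ℝ → ℂ := fun ε => ∫ x : ℝ, f ((x:ℂ) + ε * I) with hA
  -- A is constant on (0, ∞)
  have hAA : ∀ a b : ℝ, 0 < a → 0 < b → A a = A b := by
    intro a b ha hb
    have hrect : ∀ R : ℝ,
        (∫ x : ℝ in -R..R, f ((x:ℂ) + a * I)) - (∫ x : ℝ in -R..R, f ((x:ℂ) + b * I)) +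
          I • (∫ y : ℝ in a..b, f ((R:ℂ) + y * I)) -
          I • (∫ y : ℝ in a..b, f ((-R:ℝ) + y * I)) = 0 := by
      intro R
      have hd : DifferentiableOn ℂ f
          (Set.uIcc ((-R:ℝ) + a*I : ℂ).re ((R:ℝ) + b*I : ℂ).re ×ℂ
            Set.uIcc ((-R:ℝ) + a*I : ℂ).im ((R:ℝ) + b*I : ℂ).im) := by
        refine hanal.mono ?_
        intro z hz
        have h2 := (Complex.mem_reProdIm.mp hz).2
        simp only [Complex.add_im, Complex.ofReal_im, Complex.mul_im, Complex.ofReal_re,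
          Complex.I_im, Complex.I_re, mul_one, mul_zero, add_zero, zero_add] at h2
        rcases Set.mem_uIcc.mp h2 with ⟨h, -⟩ | ⟨h, -⟩ <;>
          (show 0 < z.im; linarith)
      have h := Complex.integral_boundary_rect_eq_zero_of_differentiableOn f
        ((-R:ℝ) + a*I) ((R:ℝ) + b*I) hd
      simp only [Complex.add_re, Complex.add_im, Complex.ofReal_re, Complex.ofReal_im,
        Complex.mul_re, Complex.mul_im, Complex.I_re, Complex.I_im, mul_zero, mul_one,
        zero_mul, sub_zero, add_zero, zero_add, zero_sub] at h
      exact h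
    have h1 : Tendsto (fun R : ℝ => ∫ x : ℝ in -R..R, f ((x:ℂ) + a * I)) atTop (𝓝 (A a)) :=
      intervalIntegral_tendsto_integral (hint a ha.le) tendsto_neg_atTop_atBot tendsto_id
    have h2 : Tendsto (fun R : ℝ => ∫ x : ℝ in -R..R, f ((x:ℂ) + b * I)) atTop (𝓝 (A b)) :=
      intervalIntegral_tendsto_integral (hint b hb.le) tendsto_neg_atTop_atBot tendsto_id
    have hbnd0 : Tendsto (fun R : ℝ => C * (1 + R) ^ (-s) * |b - a|) atTop (𝓝 0) := by
      have h0 : Tendsto (fun R : ℝ => (1 + R)) atTop atTop :=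
        tendsto_atTop_add_const_left _ 1 tendsto_id
      have h' := (((tendsto_rpow_neg_atTop (by linarith : (0:ℝ) < s)).comp h0).const_mul
        C).mul_const |b - a|
      simpa using h'
    have hsidebd : ∀ (R u : ℝ), 0 ≤ R → |u| = R →
        ‖∫ y : ℝ in a..b, f ((u:ℂ) + y * I)‖ ≤ C * (1 + R) ^ (-s) * |b - a| := by
      intro R u hR hu
      refine intervalIntegral.norm_integral_le_of_norm_le_const ?_
      intro y hy
      have hy0 : 0 < y := (lt_min ha hb).trans hy.1
      have h := hbd1 ((u:ℂ) + y * I) (by simpa using hy0.le) (hmemE u y hy0)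
      simpa [hu] using h
    have hs1 : Tendsto (fun R : ℝ => ∫ y : ℝ in a..b, f ((R:ℂ) + y * I)) atTop (𝓝 0) := by
      refine squeeze_zero_norm' ?_ hbnd0
      filter_upwards [eventually_ge_atTop (0:ℝ)] with R hR
      exact hsidebd R R hR (_root_.abs_of_nonneg hR)
    have hs2 : Tendsto (fun R : ℝ => ∫ y : ℝ in a..b, f (((-R:ℝ):ℂ) + y * I)) atTop (𝓝 0) := by
      refine squeeze_zero_norm' ?_ hbnd0
      filter_upwards [eventually_ge_atTop (0:ℝ)] with R hR
      exact hsidebd R (-R) hR (by rw [abs_neg, _root_.abs_of_nonneg hR])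
    have hT := ((h1.sub h2).add (hs1.const_smul I)).sub (hs2.const_smul I)
    have h0 := tendsto_nhds_unique (hT.congr hrect) (tendsto_const_nhds (x := (0:ℂ)))
    simp only [smul_zero, add_zero, sub_zero] at h0
    exact sub_eq_zero.mp h0
  -- A tends to 0 at infinity
  have hKint : Integrable (fun x : ℝ => (1 + |x|) ^ (-t)) := hg t ht1
  have hAbd : ∀ b : ℝ, 0 < b →
      ‖A b‖ ≤ (C * (1 + b) ^ (-(s - t))) * ∫ x : ℝ, (1 + |x|) ^ (-t) := by
    intro b hb
    have h := norm_integral_le_of_norm_le (μ := volume)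
      (f := fun x : ℝ => f ((x:ℂ) + b * I))
      (g := fun x : ℝ => (C * (1 + b) ^ (-(s - t))) * (1 + |x|) ^ (-t))
      (hKint.const_mul _) (.of_forall fun x => by
        have h := hbd2 ((x:ℂ) + b * I) (by simpa using hb.le) (hmemE x b hb)
        simpa using h)
    rwa [integral_const_mul] at h
  have hAtop : Tendsto A atTop (𝓝 0) := by
    have h0 : Tendsto (fun b : ℝ => (1 + b)) atTop atTop :=
      tendsto_atTop_add_const_left _ 1 tendsto_id
    have hb0 : Tendsto
        (fun b : ℝ => (C * (1 + b) ^ (-(s - t))) * ∫ x : ℝ, (1 + |x|) ^ (-t)) atTop (𝓝 0) := by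
      have h' := (((tendsto_rpow_neg_atTop (by linarith : (0:ℝ) < s - t)).comp h0).const_mul
        C).mul_const (∫ x : ℝ, (1 + |x|) ^ (-t))
      simpa using h'
    refine squeeze_zero_norm' ?_ hb0
    filter_upwards [eventually_gt_atTop (0:ℝ)] with b hb
    exact hAbd b hb
  -- hence A vanishes on (0, ∞)
  have hAzero : ∀ a : ℝ, 0 < a → A a = 0 := by
    intro a ha
    have hconst : Tendsto A atTop (𝓝 (A a)) := by
      refine tendsto_const_nhds.congr' ?_
      filter_upwards [eventually_gt_atTop (0:ℝ)] with b hb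
      exact hAA a b ha hb
    exact tendsto_nhds_unique hconst hAtop
  -- limit as ε → 0⁺
  have hlim : Tendsto A (𝓝[>] (0:ℝ)) (𝓝 (∫ x : ℝ, f (x : ℂ))) := by
    refine tendsto_integral_filter_of_dominated_convergence
      (bound := fun x : ℝ => C * (1 + |x|) ^ (-s)) ?_ ?_ ((hg s hs).const_mul C) ?_
    · filter_upwards [self_mem_nhdsWithin] with ε hε
      exact (hms ε hε).aestronglyMeasurable
    · filter_upwards [self_mem_nhdsWithin] with ε (hε : (0:ℝ) < ε)
      refine .of_forall fun x => ?_
      have h := hbd1 ((x:ℂ) + ε * I) (by simpa using hε.le) (hmemE x ε hε)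
      simpa using h
    · filter_upwards [hFnull] with x hx
      have hxD : ((x:ℂ)) ∈ ({z : ℂ | 0 ≤ z.im} \ E) := hcoe x hx
      have hpath : Tendsto (fun ε : ℝ => (x:ℂ) + ε * I) (𝓝[>] (0:ℝ))
          (𝓝[({z : ℂ | 0 ≤ z.im} \ E)] (x:ℂ)) := by
        rw [tendsto_nhdsWithin_iff]
        constructor
        · have hc : Continuous (fun ε : ℝ => (x:ℂ) + ε * I) := by continuity
          have := hc.tendsto 0
          simp only [Complex.ofReal_zero, zero_mul, add_zero] at this
          exact this.mono_left nhdsWithin_le_nhds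
        · filter_upwards [self_mem_nhdsWithin] with ε (hε : (0:ℝ) < ε)
          exact ⟨by simpa using hε.le, hmemE x ε hε⟩
      exact ((hcont _ hxD).tendsto).comp hpath
  have hzero : Tendsto A (𝓝[>] (0:ℝ)) (𝓝 (0:ℂ)) := by
    refine tendsto_const_nhds.congr' ?_
    filter_upwards [self_mem_nhdsWithin] with ε (hε : (0:ℝ) < ε)
    exact (hAzero ε hε).symm
  exact (tendsto_nhds_unique hlim hzero)


/-- **Cauchy-theorem step of the vanishing lemma.** Let `s > 1`, `C > 0`, `F ⊂ ℝ` finite, and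
let `H` be a `2×2` matrix valued function, analytic on the open upper half-plane, continuous
up to the boundary away from `F`, with `‖H(z)‖ ≤ C (1+|z|)^{−s}` and at worst logarithmic
singularities at the points of `F`.  Then the entrywise integral of its boundary values over
`ℝ` vanishes. -/
theorem cauchy_step (s C : ℝ) (hs : 1 < s) (hC : 0 < C) (F : Set ℝ) (hF : F.Finite)
    (H : ℂ → M2)
    (hanal : ∀ i j, DifferentiableOn ℂ (fun z => H z i j) {z : ℂ | 0 < z.im})
    (hcont : ∀ i j, ContinuousOn (fun z => H z i j)
      ({z : ℂ | 0 ≤ z.im} \ ((fun x : ℝ => (x : ℂ)) '' F)))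
    (hbound : ∀ z : ℂ, 0 ≤ z.im → z ∉ (fun x : ℝ => (x : ℂ)) '' F →
      ∀ i j, ‖H z i j‖ ≤ C * (1 + ‖z‖) ^ (-s))
    (hlog : ∀ a ∈ F, ∃ (C' : ℝ) (U : Set ℂ), U ∈ 𝓝 (a : ℂ) ∧
      ∀ z ∈ U, 0 ≤ z.im → z ∉ (fun x : ℝ => (x : ℂ)) '' F →
      ∀ i j, ‖H z i j‖ ≤ C' * |Real.log (‖z - (a : ℂ)‖)|) :
    ∀ i j, ∫ x : ℝ, H (x : ℂ) i j = 0 := by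
  intro i j
  refine cauchy_step_key s C hs hC F hF (fun z => H z i j) (hanal i j) (hcont i j) ?_
  intro z hz hzE
  exact hbound z hz hzE i j
end
end

section
/- Unimodularity of the Fokas–Its–Kitaev solution: For every n ≥ 1 and every z ∈ ℂ∖𝓘, p_n(z) q_{n−1}(z) − p_{n−1}(z) q_n(z) = −h_{n−1}/(2πi); equivalently, the Fokas–Its–Kitaev matrix Y(z) := [[p_n(z), q_n(z)], [−(2πi/h_{n−1}) p_{n−1}(z), −(2πi/h_{n−1}) q_{n−1}(z)]] satisfies det Y(z) = 1 identically on ℂ∖𝓘. -/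
open Complex Filter Topology MeasureTheory Polynomial

noncomputable section

/-- A finite collection of pairwise disjoint closed intervals of `ℝ`, regarded as the
subset of `ℝ` it covers. -/
def IsIntervalCollection (Iset : Set ℝ) : Prop :=
  ∃ (m : ℕ) (f : Fin m → Set ℝ), (∀ i, IsClosed (f i) ∧ Convex ℝ (f i) ∧ (f i).Nonempty)
    ∧ Pairwise (Function.onFun Disjoint f) ∧ Iset = ⋃ i, f i

/-- The orthogonal polynomial setup of the Fokas–Its–Kitaev Riemann–Hilbert problem:
`Iset` is a compact finite union of closed pairwise disjoint intervals, `w` an integrable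
nonnegative weight on `Iset` which is positive on a set of positive measure, and `p j` are
the monic orthogonal polynomials, `∫_I p_j p_m w = h_j δ_{jm}` with `h_j > 0`. -/
structure OPSetup where
  Iset : Set ℝ
  Iset_intervals : IsIntervalCollection Iset
  Iset_compact : IsCompact Iset
  w : ℝ → ℝ
  w_nonneg : ∀ x ∈ Iset, 0 ≤ w x
  w_integrable : IntegrableOn w Iset
  w_pos : 0 < volume {x ∈ Iset | 0 < w x}
  p : ℕ → Polynomial ℝ
  p_monic : ∀ j, (p j).Monic
  p_degree : ∀ j, (p j).natDegree = j
  h : ℕ → ℝ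
  h_pos : ∀ j, 0 < h j
  orth : ∀ j m : ℕ, ∫ x in Iset, (p j).eval x * (p m).eval x * w x =
    if j = m then h j else 0

namespace OPSetup

/-- The Cauchy transform `q_j(z) = (1/2πi) ∫_I p_j(x) w(x)/(x−z) dx`. -/
def q (S : OPSetup) (j : ℕ) (z : ℂ) : ℂ :=
  (2 * (Real.pi : ℂ) * Complex.I)⁻¹ *
    ∫ x in S.Iset, (((p S j).eval x * S.w x : ℝ) : ℂ) / ((x : ℂ) - z)

/-- The Fokas–Its–Kitaev matrix `Y`. -/
def Y (S : OPSetup) (n : ℕ) (z : ℂ) : M2 :=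
  !![((p S n).eval₂ (algebraMap ℝ ℂ) z), S.q n z;
     -(2 * (Real.pi : ℂ) * Complex.I / (S.h (n - 1) : ℂ)) * ((p S (n-1)).eval₂ (algebraMap ℝ ℂ) z),
     -(2 * (Real.pi : ℂ) * Complex.I / (S.h (n - 1) : ℂ)) * S.q (n - 1) z]

end OPSetup

namespace OPSetup
variable (S : OPSetup)

lemma msIset : MeasurableSet S.Iset := S.Iset_compact.isClosed.measurableSet

lemma integrable_mul_w (f : ℝ → ℂ) (hf : ContinuousOn f S.Iset) :
    IntegrableOn (fun x => f x * (S.w x : ℂ)) S.Iset := by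
  obtain ⟨C, hC⟩ := S.Iset_compact.exists_bound_of_continuousOn hf
  have hw : Integrable (fun x => (S.w x : ℂ)) (volume.restrict S.Iset) :=
    S.w_integrable.ofReal
  exact hw.bdd_mul (hf.aestronglyMeasurable S.msIset)
    ((ae_restrict_iff' S.msIset).2 (ae_of_all _ hC))

/-- The bilinear functional `L j Q = ∫ p_j(x) Q(x) w(x)`. -/
def L (j : ℕ) (Q : ℂ[X]) : ℂ :=
  ∫ x in S.Iset, (((S.p j).eval x : ℝ) : ℂ) * Q.eval (x : ℂ) * (S.w x : ℂ)

lemma contQ (Q : ℂ[X]) : Continuous fun x : ℝ => Q.eval (x : ℂ) :=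
  Q.continuous.comp Complex.continuous_ofReal

lemma contP (j : ℕ) : Continuous fun x : ℝ => (((S.p j).eval x : ℝ) : ℂ) :=
  Complex.continuous_ofReal.comp (S.p j).continuous

lemma integrable_L (j : ℕ) (Q : ℂ[X]) :
    IntegrableOn (fun x => (((S.p j).eval x : ℝ) : ℂ) * Q.eval (x : ℂ) * (S.w x : ℂ)) S.Iset :=
  S.integrable_mul_w _ (((S.contP j).mul (contQ Q)).continuousOn)

lemma L_pmap (j m : ℕ) :
    S.L j ((S.p m).map (algebraMap ℝ ℂ)) = if j = m then (S.h j : ℂ) else 0 := by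
  have hfun : ∀ x : ℝ, (((S.p j).eval x : ℝ) : ℂ) * ((S.p m).map (algebraMap ℝ ℂ)).eval (x : ℂ)
      * (S.w x : ℂ) = ((((S.p j).eval x : ℝ) * (S.p m).eval x * S.w x : ℝ) : ℂ) := by
    intro x
    rw [eval_map, show ((x : ℝ) : ℂ) = algebraMap ℝ ℂ x from rfl, eval₂_at_apply]
    push_cast [Complex.coe_algebraMap]; ring
  rw [L]
  simp_rw [hfun]
  have h1 : (∫ x in S.Iset, (((S.p j).eval x * (S.p m).eval x * S.w x : ℝ) : ℂ))
      = ((∫ x in S.Iset, (S.p j).eval x * (S.p m).eval x * S.w x : ℝ) : ℂ) := integral_ofReal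
  rw [h1, S.orth j m]
  split <;> simp

lemma L_add (j : ℕ) (Q₁ Q₂ : ℂ[X]) : S.L j (Q₁ + Q₂) = S.L j Q₁ + S.L j Q₂ := by
  rw [L, L, L, ← integral_add (S.integrable_L j Q₁) (S.integrable_L j Q₂)]
  refine integral_congr_ae (ae_of_all _ fun x => ?_)
  simp [eval_add]; ring

lemma L_C_mul (j : ℕ) (c : ℂ) (Q : ℂ[X]) : S.L j (C c * Q) = c * S.L j Q := by
  rw [L, L, ← integral_const_mul]
  refine integral_congr_ae (ae_of_all _ fun x => ?_)
  simp [eval_mul]; ring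

lemma L_zero' (j : ℕ) : S.L j 0 = 0 := by simp [L]

lemma L_lt : ∀ (d j : ℕ) (Q : ℂ[X]), Q.natDegree ≤ d → Q.natDegree < j → S.L j Q = 0 := by
  have decomp : ∀ (j : ℕ) (Q : ℂ[X]), Q ≠ 0 →
      ∃ R : ℂ[X], (R = 0 ∨ R.natDegree < Q.natDegree) ∧
        S.L j Q = Q.leadingCoeff * S.L j ((S.p Q.natDegree).map (algebraMap ℝ ℂ)) + S.L j R := by
    intro j Q hQ0
    set M : ℂ[X] := (S.p Q.natDegree).map (algebraMap ℝ ℂ) with hM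
    have hMm : M.Monic := (S.p_monic Q.natDegree).map _
    have hMd : M.natDegree = Q.natDegree := by
      rw [hM, (S.p_monic Q.natDegree).natDegree_map, S.p_degree]
    refine ⟨Q - C Q.leadingCoeff * M, ?_, ?_⟩
    · rcases eq_or_ne (Q - C Q.leadingCoeff * M) 0 with h | h
      · exact Or.inl h
      · refine Or.inr (natDegree_lt_natDegree h ?_)
        refine degree_sub_lt ?_ hQ0 ?_
        · rw [degree_C_mul (leadingCoeff_ne_zero.2 hQ0), degree_eq_natDegree hMm.ne_zero, hMd,
            degree_eq_natDegree hQ0]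
        · rw [leadingCoeff_mul, leadingCoeff_C, hMm.leadingCoeff, mul_one]
    · have : Q = C Q.leadingCoeff * M + (Q - C Q.leadingCoeff * M) := by ring
      nth_rewrite 1 [this]
      rw [S.L_add, S.L_C_mul]
  intro d
  induction d with
  | zero =>
    intro j Q hd hj
    rcases eq_or_ne Q 0 with rfl | hQ0
    · exact S.L_zero' j
    · obtain ⟨R, hR, hLR⟩ := decomp j Q hQ0
      have hR0 : R = 0 := by
        rcases hR with h | h
        · exact h
        · omega
      rw [hLR, hR0, S.L_zero', S.L_pmap, if_neg (by omega)]
      ring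
  | succ d IH =>
    intro j Q hd hj
    rcases eq_or_ne Q 0 with rfl | hQ0
    · exact S.L_zero' j
    · obtain ⟨R, hR, hLR⟩ := decomp j Q hQ0
      have hLR0 : S.L j R = 0 := by
        rcases hR with rfl | h
        · exact S.L_zero' j
        · exact IH j R (by omega) (by omega)
      rw [hLR, hLR0, S.L_pmap, if_neg (by omega)]
      ring

lemma L_lt' (j : ℕ) (Q : ℂ[X]) (hj : Q.natDegree < j) : S.L j Q = 0 :=
  S.L_lt Q.natDegree j Q le_rfl hj

lemma L_monic (j : ℕ) (Q : ℂ[X]) (hm : Q.Monic) (hd : Q.natDegree = j) :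
    S.L j Q = (S.h j : ℂ) := by
  set M : ℂ[X] := (S.p j).map (algebraMap ℝ ℂ) with hM
  have hMm : M.Monic := (S.p_monic j).map _
  have hMd : M.natDegree = j := by rw [hM, (S.p_monic j).natDegree_map, S.p_degree]
  have hQ : Q = M + (Q - M) := by ring
  have hLR : S.L j (Q - M) = 0 := by
    rcases eq_or_ne (Q - M) 0 with h | h
    · rw [h]; exact S.L_zero' j
    · refine S.L_lt' j _ (hd ▸ natDegree_lt_natDegree h ?_)
      refine degree_sub_lt ?_ hm.ne_zero ?_
      · rw [degree_eq_natDegree hm.ne_zero, degree_eq_natDegree hMm.ne_zero, hd, hMd]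
      · rw [hm.leadingCoeff, hMm.leadingCoeff]
  nth_rewrite 1 [hQ]
  rw [S.L_add, hLR, S.L_pmap, if_pos rfl, add_zero]

end OPSetup

/-- **Unimodularity of the Fokas–Its–Kitaev solution.** For every `n ≥ 1` and
`z ∈ ℂ∖𝓘`, `p_n(z) q_{n−1}(z) − p_{n−1}(z) q_n(z) = −h_{n−1}/(2πi)`; equivalently
`det Y(z) = 1` identically on `ℂ∖𝓘`. -/
theorem FIK_unimodular (S : OPSetup) (n : ℕ) (hn : 1 ≤ n) (z : ℂ)
    (hz : z ∉ (fun x : ℝ => (x : ℂ)) '' S.Iset) :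
    ((S.p n).eval₂ (algebraMap ℝ ℂ) z) * S.q (n - 1) z -
      ((S.p (n - 1)).eval₂ (algebraMap ℝ ℂ) z) * S.q n z
      = -(S.h (n - 1) : ℂ) / (2 * (Real.pi : ℂ) * Complex.I) ∧
    (S.Y n z).det = 1 := by
  have main : ((S.p n).eval₂ (algebraMap ℝ ℂ) z) * S.q (n - 1) z -
      ((S.p (n - 1)).eval₂ (algebraMap ℝ ℂ) z) * S.q n z
      = -(S.h (n - 1) : ℂ) / (2 * (Real.pi : ℂ) * Complex.I) := by
    have hne : ∀ x ∈ S.Iset, (x : ℂ) - z ≠ 0 := by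
      intro x hx h
      exact hz ⟨x, hx, sub_eq_zero.1 h⟩
    set P : ℂ[X] := (S.p n).map (algebraMap ℝ ℂ) with hP
    set P' : ℂ[X] := (S.p (n - 1)).map (algebraMap ℝ ℂ) with hP'
    have hPm : P.Monic := (S.p_monic n).map _
    have hPd : P.natDegree = n := by rw [hP, (S.p_monic n).natDegree_map, S.p_degree]
    have hP'm : P'.Monic := (S.p_monic (n - 1)).map _
    have hP'd : P'.natDegree = n - 1 := by rw [hP', (S.p_monic (n-1)).natDegree_map, S.p_degree]
    -- divided differences
    obtain ⟨A, hA⟩ : (X - Polynomial.C z) ∣ P - Polynomial.C (P.eval z) :=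
      X_sub_C_dvd_sub_C_eval
    obtain ⟨B, hB⟩ : (X - Polynomial.C z) ∣ P' - Polynomial.C (P'.eval z) :=
      X_sub_C_dvd_sub_C_eval
    have hsubm : (P - Polynomial.C (P.eval z)).Monic := by
      have hd : (P - Polynomial.C (P.eval z)).natDegree = n := by rw [natDegree_sub_C, hPd]
      rw [Monic, leadingCoeff, hd, coeff_sub, coeff_C, if_neg (by omega : ¬ n = 0), sub_zero,
        ← hPd]
      exact hPm.coeff_natDegree
    have hXz : (X - Polynomial.C z : ℂ[X]) ≠ 0 := X_sub_C_ne_zero z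
    have hA0 : A ≠ 0 := by
      intro h
      rw [h, mul_zero] at hA
      have := hsubm.ne_zero
      exact this hA
    have hAd : A.natDegree = n - 1 := by
      have := natDegree_mul hXz hA0
      rw [← hA, natDegree_sub_C, hPd, natDegree_X_sub_C] at this
      omega
    have hAm : A.Monic := by
      have h1 : (X - Polynomial.C z).leadingCoeff * A.leadingCoeff = 1 := by
        rw [← leadingCoeff_mul, ← hA, hsubm.leadingCoeff]
      rwa [leadingCoeff_X_sub_C, one_mul] at h1
    have hBd : B.natDegree < n := by
      rcases eq_or_ne B 0 with rfl | hB0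
      · simpa using (show 0 < n by omega)
      · have h1 := natDegree_mul hXz hB0
        rw [← hB, natDegree_sub_C, hP'd, natDegree_X_sub_C] at h1
        omega
    -- the integrals T j
    set T : ℕ → ℂ := fun j => ∫ x in S.Iset,
      ((((S.p j).eval x : ℝ) : ℂ) / ((x : ℂ) - z)) * (S.w x : ℂ) with hT
    have hqT : ∀ j, S.q j z = (2 * (Real.pi : ℂ) * Complex.I)⁻¹ * T j := by
      intro j
      rw [OPSetup.q, hT]
      congr 1
      refine integral_congr_ae (ae_of_all _ fun x => ?_)
      push_cast
      ring
    have hint : ∀ j, IntegrableOn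
        (fun x => ((((S.p j).eval x : ℝ) : ℂ) / ((x : ℂ) - z)) * (S.w x : ℂ)) S.Iset := by
      intro j
      refine S.integrable_mul_w _ ?_
      refine ContinuousOn.div (S.contP j).continuousOn ?_ (fun x hx => hne x hx)
      exact (Continuous.sub (Complex.continuous_ofReal) continuous_const).continuousOn
    -- pointwise identity
    have hpt : ∀ x ∈ S.Iset,
        P.eval z * (((((S.p (n-1)).eval x : ℝ) : ℂ) / ((x : ℂ) - z)) * (S.w x : ℂ))
          - P'.eval z * (((((S.p n).eval x : ℝ) : ℂ) / ((x : ℂ) - z)) * (S.w x : ℂ))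
        = (-((((S.p (n-1)).eval x : ℝ) : ℂ) * A.eval (x : ℂ))
            + (((S.p n).eval x : ℝ) : ℂ) * B.eval (x : ℂ)) * (S.w x : ℂ) := by
      intro x hx
      have hxz := hne x hx
      have hevA : P.eval ((x : ℝ) : ℂ) - P.eval z = ((x : ℂ) - z) * A.eval (x : ℂ) := by
        have := congrArg (Polynomial.eval ((x : ℝ) : ℂ)) hA
        simpa using this
      have hevB : P'.eval ((x : ℝ) : ℂ) - P'.eval z = ((x : ℂ) - z) * B.eval (x : ℂ) := by
        have := congrArg (Polynomial.eval ((x : ℝ) : ℂ)) hB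
        simpa using this
      have hPx : P.eval ((x : ℝ) : ℂ) = (((S.p n).eval x : ℝ) : ℂ) := by
        rw [hP, eval_map, show ((x : ℝ) : ℂ) = algebraMap ℝ ℂ x from rfl, eval₂_at_apply]
        rfl
      have hP'x : P'.eval ((x : ℝ) : ℂ) = (((S.p (n-1)).eval x : ℝ) : ℂ) := by
        rw [hP', eval_map, show ((x : ℝ) : ℂ) = algebraMap ℝ ℂ x from rfl, eval₂_at_apply]
        rfl
      rw [hPx] at hevA
      rw [hP'x] at hevB
      have hPz : P.eval z = (((S.p n).eval x : ℝ) : ℂ) - ((x : ℂ) - z) * A.eval (x : ℂ) := by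
        linear_combination -hevA
      have hP'z : P'.eval z = (((S.p (n-1)).eval x : ℝ) : ℂ) - ((x : ℂ) - z) * B.eval (x : ℂ) := by
        linear_combination -hevB
      rw [hPz, hP'z]
      field_simp
      ring
    -- the key integral identity
    have key : P.eval z * T (n - 1) - P'.eval z * T n = -(S.h (n - 1) : ℂ) := by
      rw [hT]
      rw [← integral_const_mul, ← integral_const_mul,
        ← integral_sub ((hint (n-1)).const_mul _) ((hint n).const_mul _)]
      rw [setIntegral_congr_fun S.msIset hpt]
      have hsplit : ∫ x in S.Iset,
          (-((((S.p (n-1)).eval x : ℝ) : ℂ) * A.eval (x : ℂ))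
            + (((S.p n).eval x : ℝ) : ℂ) * B.eval (x : ℂ)) * (S.w x : ℂ)
          = -(S.L (n-1) A) + S.L n B := by
        have hi1 : Integrable (fun x : ℝ =>
            -((((S.p (n-1)).eval x : ℝ) : ℂ) * A.eval (x : ℂ) * (S.w x : ℂ)))
            (volume.restrict S.Iset) := (S.integrable_L (n-1) A).neg
        have hi2 : Integrable (fun x : ℝ =>
            (((S.p n).eval x : ℝ) : ℂ) * B.eval (x : ℂ) * (S.w x : ℂ))
            (volume.restrict S.Iset) := S.integrable_L n B
        calc ∫ x in S.Iset,
              (-((((S.p (n-1)).eval x : ℝ) : ℂ) * A.eval (x : ℂ))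
                + (((S.p n).eval x : ℝ) : ℂ) * B.eval (x : ℂ)) * (S.w x : ℂ)
            = ∫ x in S.Iset,
              (-((((S.p (n-1)).eval x : ℝ) : ℂ) * A.eval (x : ℂ) * (S.w x : ℂ))
                + (((S.p n).eval x : ℝ) : ℂ) * B.eval (x : ℂ) * (S.w x : ℂ)) :=
              integral_congr_ae (ae_of_all _ fun x => by ring)
          _ = (∫ x in S.Iset,
                -((((S.p (n-1)).eval x : ℝ) : ℂ) * A.eval (x : ℂ) * (S.w x : ℂ)))
              + ∫ x in S.Iset,
                (((S.p n).eval x : ℝ) : ℂ) * B.eval (x : ℂ) * (S.w x : ℂ) :=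
              integral_add hi1 hi2
          _ = -(S.L (n-1) A) + S.L n B := by rw [integral_neg]; rfl
      rw [hsplit, S.L_monic (n-1) A hAm hAd, S.L_lt' n B hBd]
      ring
    have h2pi : (2 * (Real.pi : ℂ) * Complex.I) ≠ 0 := two_pi_I_ne_zero
    rw [show (S.p n).eval₂ (algebraMap ℝ ℂ) z = P.eval z by rw [hP, eval_map],
      show (S.p (n-1)).eval₂ (algebraMap ℝ ℂ) z = P'.eval z by rw [hP', eval_map],
      hqT, hqT]
    field_simp
    linear_combination key
  refine ⟨main, ?_⟩
  rw [OPSetup.Y, Matrix.det_fin_two_of]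
  have hh : (S.h (n-1) : ℂ) ≠ 0 := Complex.ofReal_ne_zero.2 (S.h_pos (n-1)).ne'
  have h2pi : (2 * (Real.pi : ℂ) * Complex.I) ≠ 0 := two_pi_I_ne_zero
  calc ((S.p n).eval₂ (algebraMap ℝ ℂ) z) *
        (-(2 * (Real.pi : ℂ) * Complex.I / (S.h (n - 1) : ℂ)) * S.q (n - 1) z) -
      S.q n z * (-(2 * (Real.pi : ℂ) * Complex.I / (S.h (n - 1) : ℂ)) *
        ((S.p (n-1)).eval₂ (algebraMap ℝ ℂ) z))
      = -(2 * (Real.pi : ℂ) * Complex.I / (S.h (n - 1) : ℂ)) *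
          (((S.p n).eval₂ (algebraMap ℝ ℂ) z) * S.q (n - 1) z -
            ((S.p (n - 1)).eval₂ (algebraMap ℝ ℂ) z) * S.q n z) := by ring
    _ = -(2 * (Real.pi : ℂ) * Complex.I / (S.h (n - 1) : ℂ)) *
          (-(S.h (n - 1) : ℂ) / (2 * (Real.pi : ℂ) * Complex.I)) := by rw [main]
    _ = 1 := by field_simp
end
end

section
/- Jump relation of the Fokas–Its–Kitaev solution: Let x₀ lie in the interior of 𝓘 and suppose w is Hölder continuous in a neighbourhood of x₀. Then the boundary values Y_±(x₀) := lim_{ε→0⁺} Y(x₀ ± iε) of the Fokas–Its–Kitaev matrix Y exist and satisfy Y₊(x₀) = Y₋(x₀) · [[1, w(x₀)], [0, 1]]. -/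
open Complex Filter Topology MeasureTheory Polynomial

noncomputable section

open Set

set_option maxHeartbeats 1000000

private lemma tendsto_zpath (x₀ σ : ℝ) :
    Tendsto (fun ε : ℝ => (x₀ : ℂ) + (ε : ℂ) * (σ : ℂ) * Complex.I) (𝓝[>] 0) (𝓝 (x₀ : ℂ)) := by
  have h : Continuous (fun ε : ℝ => (x₀ : ℂ) + (ε : ℂ) * (σ : ℂ) * Complex.I) := by fun_prop
  have := (h.tendsto 0).mono_left (nhdsWithin_le_nhds (s := Set.Ioi (0:ℝ)))
  simpa using this

private lemma abs_den_ge (t x₀ σ ε : ℝ) :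
    |t - x₀| ≤ ‖(t : ℂ) - ((x₀ : ℂ) + (ε : ℂ) * (σ : ℂ) * Complex.I)‖ := by
  have h := Complex.abs_re_le_norm ((t : ℂ) - ((x₀ : ℂ) + (ε : ℂ) * (σ : ℂ) * Complex.I))
  simpa using h

private lemma abs_den_ge' (t x₀ σ ε : ℝ) :
    |ε * σ| ≤ ‖(t : ℂ) - ((x₀ : ℂ) + (ε : ℂ) * (σ : ℂ) * Complex.I)‖ := by
  have h := Complex.abs_im_le_norm ((t : ℂ) - ((x₀ : ℂ) + (ε : ℂ) * (σ : ℂ) * Complex.I))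
  simpa [abs_mul] using h

private lemma den_ne_zero (t x₀ σ ε : ℝ) (hu : ε * σ ≠ 0) :
    (t : ℂ) - ((x₀ : ℂ) + (ε : ℂ) * (σ : ℂ) * Complex.I) ≠ 0 := by
  intro h
  have := congrArg Complex.im h
  simp at this
  rcases this with h1 | h1 <;> simp [mul_eq_zero, h1] at hu

private lemma den_lim_ne_zero {t x₀ : ℝ} (ht : t ≠ x₀) : (t : ℂ) - (x₀ : ℂ) ≠ 0 := by
  simpa [sub_eq_zero, Complex.ofReal_inj] using ht

/-- Pointwise convergence of the Cauchy kernel away from `x₀`. -/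
private lemma tendsto_kernel {t x₀ : ℝ} (σ : ℝ) (ht : t ≠ x₀) (c : ℂ) :
    Tendsto (fun ε : ℝ => c / ((t : ℂ) - ((x₀ : ℂ) + (ε : ℂ) * (σ : ℂ) * Complex.I)))
      (𝓝[>] 0) (𝓝 (c / ((t : ℂ) - (x₀ : ℂ)))) := by
  exact Tendsto.div tendsto_const_nhds (tendsto_const_nhds.sub (tendsto_zpath x₀ σ))
    (den_lim_ne_zero ht)

private lemma integrable_abs_rpow (x₀ a b r : ℝ) (hr : -1 < r) :
    IntegrableOn (fun t : ℝ => |t - x₀| ^ r) (Set.Icc a b) := by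
  have hR : ∀ d : ℝ, IntegrableOn (fun t : ℝ => |t - x₀| ^ r) (Set.Icc x₀ d) := by
    intro d
    rcases le_or_gt x₀ d with hd | hd
    · have h0 : IntervalIntegrable (fun u : ℝ => u ^ r) volume 0 (d - x₀) :=
        intervalIntegral.intervalIntegrable_rpow' hr
      have h1 := h0.comp_sub_right x₀
      simp only [zero_add, sub_add_cancel] at h1
      have h2 : IntegrableOn (fun t : ℝ => (t - x₀) ^ r) (Set.Icc x₀ d) := by
        rw [← intervalIntegrable_iff_integrableOn_Icc_of_le hd]
        exact h1
      refine h2.congr_fun (fun t ht => ?_) measurableSet_Icc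
      rw [_root_.abs_of_nonneg (by linarith [ht.1] : (0:ℝ) ≤ t - x₀)]
    · simp [Set.Icc_eq_empty_of_lt hd, IntegrableOn]
  have hL : ∀ c : ℝ, IntegrableOn (fun t : ℝ => |t - x₀| ^ r) (Set.Icc c x₀) := by
    intro c
    rcases le_or_gt c x₀ with hc | hc
    · have h0 : IntervalIntegrable (fun u : ℝ => u ^ r) volume 0 (x₀ - c) :=
        intervalIntegral.intervalIntegrable_rpow' hr
      have h1 : IntervalIntegrable (fun u : ℝ => (-u) ^ r) volume 0 (c - x₀) := by
        have := (IntervalIntegrable.iff_comp_neg (f := fun u : ℝ => u ^ r) (a := 0) (b := x₀ - c)).mp h0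
        simpa using this
      have h2 := h1.comp_sub_right x₀
      simp only [zero_add, sub_add_cancel] at h2
      have h3 : IntegrableOn (fun t : ℝ => (-(t - x₀)) ^ r) (Set.Icc c x₀) := by
        rw [← intervalIntegrable_iff_integrableOn_Icc_of_le hc]
        exact h2.symm
      refine h3.congr_fun (fun t ht => ?_) measurableSet_Icc
      rw [_root_.abs_of_nonpos (by linarith [ht.2] : t - x₀ ≤ 0)]
    · simp [Set.Icc_eq_empty_of_lt hc, IntegrableOn]
  have hcover : Set.Icc a b ⊆ Set.Icc (min a x₀) x₀ ∪ Set.Icc x₀ (max b x₀) := by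
    intro t ht
    rcases le_or_gt t x₀ with h | h
    · exact Or.inl ⟨le_trans (min_le_left _ _) ht.1, h⟩
    · exact Or.inr ⟨h.le, le_trans ht.2 (le_max_left _ _)⟩
  exact ((hL _).union (hR _)).mono_set hcover
private lemma cauchy_bv (K : Set ℝ) (hK : MeasurableSet K) (f : ℝ → ℝ)
    (hf : IntegrableOn f K) (x₀ δ C' β σ : ℝ) (hδ : 0 < δ) (hC' : 0 ≤ C') (hβ : 0 < β)
    (hsub : Set.Icc (x₀ - δ) (x₀ + δ) ⊆ K)
    (hH : ∀ t ∈ Set.Icc (x₀ - δ) (x₀ + δ), |f t - f x₀| ≤ C' * |t - x₀| ^ β)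
    (hσ : σ = 1 ∨ σ = -1) :
    Tendsto
      (fun ε : ℝ => ∫ t in K, ((f t : ℂ)) / ((t : ℂ) - ((x₀ : ℂ) + (ε : ℂ) * (σ : ℂ) * Complex.I)))
      (𝓝[>] 0)
      (𝓝 ((∫ t in K \ Set.Icc (x₀ - δ) (x₀ + δ), (f t : ℂ) / ((t : ℂ) - (x₀ : ℂ)))
        + (∫ t in Set.Icc (x₀ - δ) (x₀ + δ), ((f t : ℂ) - (f x₀ : ℂ)) / ((t : ℂ) - (x₀ : ℂ)))
        + (f x₀ : ℂ) * (Complex.log (δ : ℂ)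
            - ((Real.log δ : ℂ) - (σ : ℂ) * (Real.pi : ℂ) * Complex.I)))) := by
  have hσ0 : σ ≠ 0 := by rcases hσ with h | h <;> simp [h]
  set a := x₀ - δ with ha
  set b := x₀ + δ with hb
  set J := Set.Icc a b with hJ
  have hab : a < b := by simp [ha, hb]; linarith
  have haJ : a < x₀ := by simp [ha]; linarith
  have hbJ : x₀ < b := by simp [hb]; linarith
  set z : ℝ → ℂ := fun ε => (x₀ : ℂ) + (ε : ℂ) * (σ : ℂ) * Complex.I with hz
  -- integrability of the full integrand for ε with ε * σ ≠ 0
  have key_int : ∀ ε : ℝ, ε * σ ≠ 0 → IntegrableOn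
      (fun t : ℝ => (f t : ℂ) / ((t : ℂ) - z ε)) K := by
    intro ε hε
    have hcont : Continuous (fun t : ℝ => ((t : ℂ) - z ε)⁻¹) := by
      apply Continuous.inv₀ (by fun_prop)
      intro t; exact den_ne_zero t x₀ σ ε hε
    have h1 : IntegrableOn (fun t : ℝ => ((t : ℂ) - z ε)⁻¹ * (f t : ℂ)) K := by
      refine Integrable.bdd_mul (c := |ε * σ|⁻¹) (hf.ofReal (𝕜 := ℂ)) hcont.aestronglyMeasurable
        (Filter.Eventually.of_forall fun t => ?_)
      rw [norm_inv]
      refine inv_anti₀ (by positivity) ?_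
      simpa using abs_den_ge' t x₀ σ ε
    refine h1.congr (Filter.Eventually.of_forall fun t => (div_eq_inv_mul _ _).symm)
  have hd_inv_bdd : ∀ ε : ℝ, ε * σ ≠ 0 → ∀ t : ℝ,
      ‖((t : ℂ) - z ε)⁻¹‖ ≤ |ε * σ|⁻¹ := by
    intro ε hε t
    rw [norm_inv]
    refine inv_anti₀ (by positivity) ?_
    simpa using abs_den_ge' t x₀ σ ε
  have hcont_inv : ∀ ε : ℝ, ε * σ ≠ 0 → Continuous (fun t : ℝ => ((t : ℂ) - z ε)⁻¹) := by
    intro ε hε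
    apply Continuous.inv₀ (by fun_prop)
    intro t; exact den_ne_zero t x₀ σ ε hε
  have key_int2 : ∀ ε : ℝ, ε * σ ≠ 0 →
      IntegrableOn (fun t : ℝ => ((f t : ℂ) - (f x₀ : ℂ)) / ((t : ℂ) - z ε)) J := by
    intro ε hε
    have hint : IntegrableOn (fun t : ℝ => (f t : ℂ) - (f x₀ : ℂ)) J := by
      refine ((hf.mono_set hsub).ofReal).sub (integrableOn_const ?_)
      rw [hJ]; exact measure_Icc_lt_top.ne
    have h1 := Integrable.bdd_mul hint ((hcont_inv ε hε).aestronglyMeasurable)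
      (c := |ε * σ|⁻¹) (Filter.Eventually.of_forall (hd_inv_bdd ε hε))
    exact h1.congr (Filter.Eventually.of_forall fun t => (div_eq_inv_mul _ _).symm)
  have key_int3 : ∀ ε : ℝ, ε * σ ≠ 0 →
      IntegrableOn (fun t : ℝ => (f x₀ : ℂ) / ((t : ℂ) - z ε)) J := by
    intro ε hε
    have hint : IntegrableOn (fun t : ℝ => (f x₀ : ℂ)) J := by
      refine integrableOn_const ?_
      rw [hJ]; exact measure_Icc_lt_top.ne
    have h1 := Integrable.bdd_mul hint ((hcont_inv ε hε).aestronglyMeasurable)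
      (c := |ε * σ|⁻¹) (Filter.Eventually.of_forall (hd_inv_bdd ε hε))
    exact h1.congr (Filter.Eventually.of_forall fun t => (div_eq_inv_mul _ _).symm)
  -- far piece
  have hT1 : Tendsto (fun ε : ℝ => ∫ t in K \ J, (f t : ℂ) / ((t : ℂ) - z ε)) (𝓝[>] 0)
      (𝓝 (∫ t in K \ J, (f t : ℂ) / ((t : ℂ) - (x₀ : ℂ)))) := by
    refine tendsto_integral_filter_of_dominated_convergence (fun t => |f t| / δ) ?_ ?_ ?_ ?_
    · filter_upwards [self_mem_nhdsWithin] with ε (hε : ε ∈ Set.Ioi (0:ℝ))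
      have hεσ : ε * σ ≠ 0 := mul_ne_zero (ne_of_gt hε) hσ0
      exact ((key_int ε hεσ).mono_set diff_subset).aestronglyMeasurable
    · filter_upwards [self_mem_nhdsWithin] with ε (hε : ε ∈ Set.Ioi (0:ℝ))
      filter_upwards [ae_restrict_mem (hK.diff measurableSet_Icc)] with t ht
      have htd : δ ≤ |t - x₀| := by
        have h2 := ht.2
        rw [hJ, Set.mem_Icc] at h2
        push_neg at h2
        rcases le_or_gt a t with h | h
        · have := h2 h
          rw [_root_.abs_of_nonneg (by simp [hb] at this ⊢; linarith)]
          simp [hb] at this; linarith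
        · rw [abs_sub_comm, _root_.abs_of_nonneg (by simp [ha] at h ⊢; linarith)]
          simp [ha] at h; linarith
      have hd : δ ≤ ‖(t : ℂ) - z ε‖ := le_trans htd (abs_den_ge t x₀ σ ε)
      have hd' : δ ≤ ‖(t : ℂ) - z ε‖ := by exact hd
      rw [norm_div, Complex.norm_real, Real.norm_eq_abs]
      exact div_le_div₀ (abs_nonneg _) le_rfl hδ hd'
    · exact ((hf.mono_set diff_subset).abs).div_const δ
    · filter_upwards [ae_restrict_mem (hK.diff measurableSet_Icc)] with t ht
      have htne : t ≠ x₀ := by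
        intro h; subst h
        exact ht.2 ⟨by simp [ha]; linarith, by simp [hb]; linarith⟩
      exact tendsto_kernel σ htne _
  -- Hölder piece
  have hne_ae : ∀ᵐ t : ℝ ∂(volume.restrict J), t ≠ x₀ := by
    refine ae_restrict_of_ae ?_
    rw [ae_iff]
    convert Real.volume_singleton (a := x₀) using 2
    ext t; simp
  have hT2 : Tendsto (fun ε : ℝ => ∫ t in J, ((f t : ℂ) - (f x₀ : ℂ)) / ((t : ℂ) - z ε)) (𝓝[>] 0)
      (𝓝 (∫ t in J, ((f t : ℂ) - (f x₀ : ℂ)) / ((t : ℂ) - (x₀ : ℂ)))) := by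
    refine tendsto_integral_filter_of_dominated_convergence
      (fun t => C' * |t - x₀| ^ (β - 1)) ?_ ?_ ?_ ?_
    · filter_upwards [self_mem_nhdsWithin] with ε (hε : ε ∈ Set.Ioi (0:ℝ))
      have hεσ : ε * σ ≠ 0 := mul_ne_zero (ne_of_gt hε) hσ0
      exact (key_int2 ε hεσ).aestronglyMeasurable
    · filter_upwards [self_mem_nhdsWithin] with ε (hε : ε ∈ Set.Ioi (0:ℝ))
      filter_upwards [ae_restrict_mem measurableSet_Icc, hne_ae] with t htJ htne
      have habs : 0 < |t - x₀| := abs_pos.2 (sub_ne_zero.2 htne)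
      have hd : |t - x₀| ≤ ‖(t : ℂ) - z ε‖ := abs_den_ge t x₀ σ ε
      have hnum : ‖(f t : ℂ) - (f x₀ : ℂ)‖ = |f t - f x₀| := by
        rw [← Complex.ofReal_sub, Complex.norm_real, Real.norm_eq_abs]
      rw [norm_div, hnum]
      calc |f t - f x₀| / ‖(t : ℂ) - z ε‖
          ≤ (C' * |t - x₀| ^ β) / |t - x₀| := by
            have hd' : |t - x₀| ≤ ‖(t : ℂ) - z ε‖ := by exact hd
            exact div_le_div₀ (by positivity) (hH t htJ) habs hd'
        _ = C' * |t - x₀| ^ (β - 1) := by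
            rw [mul_div_assoc, Real.rpow_sub habs, Real.rpow_one]
    · exact (integrable_abs_rpow x₀ a b (β - 1) (by linarith)).const_mul C'
    · filter_upwards [hne_ae] with t htne
      exact tendsto_kernel σ htne _
  -- log piece
  have hlogb : Tendsto (fun ε : ℝ => Complex.log ((b : ℂ) - z ε)) (𝓝[>] 0)
      (𝓝 (Complex.log (δ : ℂ))) := by
    have h1 : Tendsto (fun ε : ℝ => (b : ℂ) - z ε) (𝓝[>] 0) (𝓝 ((δ : ℝ) : ℂ)) := by
      have h2 := (tendsto_const_nhds (x := (b : ℂ)) (f := 𝓝[>] (0:ℝ))).sub (tendsto_zpath x₀ σ)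
      have h3 : (b : ℂ) - (x₀ : ℂ) = ((δ : ℝ) : ℂ) := by rw [hb]; push_cast; ring
      rwa [h3] at h2
    exact ((continuousAt_clog (Complex.ofReal_mem_slitPlane.2 hδ)).tendsto.comp h1)
  have hloga : Tendsto (fun ε : ℝ => Complex.log ((a : ℂ) - z ε)) (𝓝[>] 0)
      (𝓝 ((Real.log δ : ℂ) - (σ : ℂ) * (Real.pi : ℂ) * Complex.I)) := by
    have hconv : Tendsto (fun ε : ℝ => (a : ℂ) - z ε) (𝓝[>] 0) (𝓝 (((-δ : ℝ) : ℂ))) := by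
      have h2 := (tendsto_const_nhds (x := (a : ℂ)) (f := 𝓝[>] (0:ℝ))).sub (tendsto_zpath x₀ σ)
      have h3 : (a : ℂ) - (x₀ : ℂ) = ((-δ : ℝ) : ℂ) := by rw [ha]; push_cast; ring
      rwa [h3] at h2
    have hre : (((-δ : ℝ) : ℂ)).re < 0 := by simpa using neg_neg_iff_pos.2 hδ
    have him : (((-δ : ℝ) : ℂ)).im = 0 := by simp
    have habs : Real.log ‖((-δ : ℝ) : ℂ)‖ = Real.log δ := by
      rw [Complex.norm_real, Real.norm_eq_abs, abs_neg, _root_.abs_of_pos hδ]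
    rcases hσ with h | h <;> subst h
    · have hmem : ∀ᶠ ε : ℝ in 𝓝[>] 0, (a : ℂ) - z ε ∈ {w : ℂ | w.im < 0} := by
        filter_upwards [self_mem_nhdsWithin] with ε (hε : ε ∈ Set.Ioi (0:ℝ))
        have him' : ((a : ℂ) - z ε).im = -ε := by simp [hz]
        simp only [Set.mem_setOf_eq, him']
        exact neg_lt_zero.2 hε
      have hmap : Tendsto (fun ε : ℝ => (a : ℂ) - z ε) (𝓝[>] 0)
          (𝓝[{w : ℂ | w.im < 0}] (((-δ : ℝ) : ℂ))) := by
        rw [tendsto_nhdsWithin_iff]; exact ⟨hconv, hmem⟩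
      have := (Complex.tendsto_log_nhdsWithin_im_neg_of_re_neg_of_im_zero hre him).comp hmap
      rw [habs] at this
      have e : ((Real.log δ : ℂ) - ((1 : ℝ) : ℂ) * (Real.pi : ℂ) * Complex.I)
          = (Real.log δ : ℂ) - (Real.pi : ℂ) * Complex.I := by push_cast; ring
      rw [e]; exact this
    · have hmem : ∀ᶠ ε : ℝ in 𝓝[>] 0, (a : ℂ) - z ε ∈ {w : ℂ | 0 ≤ w.im} := by
        filter_upwards [self_mem_nhdsWithin] with ε (hε : ε ∈ Set.Ioi (0:ℝ))
        have him' : ((a : ℂ) - z ε).im = ε := by simp [hz]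
        simp only [Set.mem_setOf_eq, him']
        exact le_of_lt hε
      have hmap : Tendsto (fun ε : ℝ => (a : ℂ) - z ε) (𝓝[>] 0)
          (𝓝[{w : ℂ | 0 ≤ w.im}] (((-δ : ℝ) : ℂ))) := by
        rw [tendsto_nhdsWithin_iff]; exact ⟨hconv, hmem⟩
      have := (Complex.tendsto_log_nhdsWithin_im_nonneg_of_re_neg_of_im_zero hre him).comp hmap
      rw [habs] at this
      have e : ((Real.log δ : ℂ) - ((-1 : ℝ) : ℂ) * (Real.pi : ℂ) * Complex.I)
          = (Real.log δ : ℂ) + (Real.pi : ℂ) * Complex.I := by push_cast; ring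
      rw [e]; exact this
  -- eventual decomposition
  have hsplit : ∀ᶠ ε : ℝ in 𝓝[>] 0,
      (∫ t in K, (f t : ℂ) / ((t : ℂ) - z ε))
        = (∫ t in K \ J, (f t : ℂ) / ((t : ℂ) - z ε))
          + (∫ t in J, ((f t : ℂ) - (f x₀ : ℂ)) / ((t : ℂ) - z ε))
          + (f x₀ : ℂ) * (Complex.log ((b : ℂ) - z ε) - Complex.log ((a : ℂ) - z ε)) := by
    filter_upwards [self_mem_nhdsWithin] with ε (hε : ε ∈ Set.Ioi (0:ℝ))
    have hεσ : ε * σ ≠ 0 := mul_ne_zero (ne_of_gt hε) hσ0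
    have hIK := key_int ε hεσ
    have hIKJ : IntegrableOn (fun t : ℝ => (f t : ℂ) / ((t : ℂ) - z ε)) (K \ J) :=
      hIK.mono_set diff_subset
    have hIJ : IntegrableOn (fun t : ℝ => (f t : ℂ) / ((t : ℂ) - z ε)) J :=
      hIK.mono_set hsub
    have hden : ∀ t : ℝ, (t : ℂ) - z ε ≠ 0 := fun t => den_ne_zero t x₀ σ ε hεσ
    have hconst : IntegrableOn (fun t : ℝ => (f x₀ : ℂ) / ((t : ℂ) - z ε)) J :=
      key_int3 ε hεσ
    have hsub2 : IntegrableOn (fun t : ℝ => ((f t : ℂ) - (f x₀ : ℂ)) / ((t : ℂ) - z ε)) J :=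
      key_int2 ε hεσ
    have e1 : (∫ t in K, (f t : ℂ) / ((t : ℂ) - z ε))
        = (∫ t in (K \ J) ∪ J, (f t : ℂ) / ((t : ℂ) - z ε)) := by
      rw [Set.diff_union_of_subset hsub]
    rw [e1, setIntegral_union disjoint_sdiff_left measurableSet_Icc hIKJ hIJ]
    have e2 : (∫ t in J, (f t : ℂ) / ((t : ℂ) - z ε))
        = ∫ t in J, (((f t : ℂ) - (f x₀ : ℂ)) / ((t : ℂ) - z ε)
            + (f x₀ : ℂ) / ((t : ℂ) - z ε)) := by
      refine setIntegral_congr_fun measurableSet_Icc fun t _ => ?_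
      rw [← add_div, sub_add_cancel]
    rw [e2, integral_add hsub2 hconst]
    have e3 : (∫ t in J, (f x₀ : ℂ) / ((t : ℂ) - z ε))
        = (f x₀ : ℂ) * ∫ t in J, ((t : ℂ) - z ε)⁻¹ := by
      simp_rw [div_eq_mul_inv]
      exact integral_const_mul _ _
    have e4 : (∫ t in J, ((t : ℂ) - z ε)⁻¹)
        = Complex.log ((b : ℂ) - z ε) - Complex.log ((a : ℂ) - z ε) := by
      rw [hJ, integral_Icc_eq_integral_Ioc, ← intervalIntegral.integral_of_le hab.le]
      have hderiv : ∀ t ∈ Set.uIcc a b,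
          HasDerivAt (fun t : ℝ => Complex.log ((t : ℂ) - z ε)) (((t : ℂ) - z ε)⁻¹) t := by
        intro t _
        have hmem : (t : ℂ) - z ε ∈ Complex.slitPlane := by
          rw [Complex.mem_slitPlane_iff]
          right
          have him' : ((t : ℂ) - z ε).im = -(ε * σ) := by simp [hz]
          rw [him']
          simpa using hεσ
        have hin : HasDerivAt (fun w : ℂ => w - z ε) 1 (t : ℂ) :=
          (hasDerivAt_id _).sub_const _
        have h1 : HasDerivAt (fun w : ℂ => Complex.log (w - z ε))
            (((t : ℂ) - z ε)⁻¹ * 1) (t : ℂ) :=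
          HasDerivAt.comp (t : ℂ) (Complex.hasDerivAt_log hmem) hin
        simpa using h1.comp_ofReal
      rw [intervalIntegral.integral_eq_sub_of_hasDerivAt hderiv]
      apply Continuous.intervalIntegrable
      exact Continuous.inv₀ (by fun_prop) hden
    rw [e3, e4]
    ring
  exact Tendsto.congr' (Filter.EventuallyEq.symm hsplit)
    ((hT1.add hT2).add (tendsto_const_nhds.mul (hlogb.sub hloga)))

private lemma tendsto_matrix2 {l : Filter ℝ} {A B C D : ℝ → ℂ} {a b c d : ℂ}
    (hA : Tendsto A l (𝓝 a)) (hB : Tendsto B l (𝓝 b)) (hC : Tendsto C l (𝓝 c))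
    (hD : Tendsto D l (𝓝 d)) :
    Tendsto (fun x => (!![A x, B x; C x, D x] : M2)) l (𝓝 (!![a, b; c, d] : M2)) := by
  refine tendsto_pi_nhds.2 fun i => ?_
  rw [tendsto_pi_nhds]
  intro j
  fin_cases i <;> fin_cases j <;>
    simpa [Matrix.cons_val_zero, Matrix.cons_val_one, Matrix.head_cons] using ‹_›

private lemma OPSetup.q_jump (S : OPSetup) (j : ℕ) (x₀ : ℝ) (hx₀ : x₀ ∈ interior S.Iset)
    (hHolder : ∃ (ε CH β : ℝ), 0 < ε ∧ 0 < CH ∧ 0 < β ∧ β ≤ 1 ∧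
      ∀ x ∈ Set.Ioo (x₀ - ε) (x₀ + ε), ∀ y ∈ Set.Ioo (x₀ - ε) (x₀ + ε),
        |S.w x - S.w y| ≤ CH * |x - y| ^ β) :
    ∃ qp qm : ℂ,
      Tendsto (fun ε : ℝ => S.q j ((x₀ : ℂ) + ε * Complex.I)) (𝓝[>] 0) (𝓝 qp) ∧
      Tendsto (fun ε : ℝ => S.q j ((x₀ : ℂ) - ε * Complex.I)) (𝓝[>] 0) (𝓝 qm) ∧
      qp = qm + (((S.p j).eval x₀ * S.w x₀ : ℝ) : ℂ) := by
  obtain ⟨ε₀, CH, β, hε₀, hCH, hβ, hβ1, hHo⟩ := hHolder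
  set f : ℝ → ℝ := fun x => (S.p j).eval x * S.w x with hfdef
  have hK : MeasurableSet S.Iset := S.Iset_compact.isClosed.measurableSet
  have hPc : Continuous fun x : ℝ => (S.p j).eval x := (S.p j).continuous
  obtain ⟨MP0, hMP0⟩ := S.Iset_compact.exists_bound_of_continuousOn hPc.continuousOn
  have hf : IntegrableOn f S.Iset := by
    refine Integrable.bdd_mul (c := MP0) S.w_integrable hPc.aestronglyMeasurable ?_
    filter_upwards [ae_restrict_mem hK] with x hx
    exact hMP0 x hx
  obtain ⟨r, hr, hrball⟩ := Metric.isOpen_iff.1 isOpen_interior x₀ hx₀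
  set δ : ℝ := min (r / 2) (ε₀ / 2) with hδdef
  have hδ : 0 < δ := lt_min (by linarith) (by linarith)
  have hδr : δ < r := lt_of_le_of_lt (min_le_left _ _) (by linarith)
  have hδε : δ < ε₀ := lt_of_le_of_lt (min_le_right _ _) (by linarith)
  have hsubK : Set.Icc (x₀ - δ) (x₀ + δ) ⊆ S.Iset := by
    intro t ht
    have h1 : |t - x₀| ≤ δ := abs_le.2 ⟨by linarith [ht.1], by linarith [ht.2]⟩
    have h2 : t ∈ Metric.ball x₀ r := by
      rw [Metric.mem_ball, Real.dist_eq]; linarith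
    exact interior_subset (hrball h2)
  have hsubIoo : Set.Icc (x₀ - δ) (x₀ + δ) ⊆ Set.Ioo (x₀ - ε₀) (x₀ + ε₀) := by
    intro t ht
    exact ⟨by linarith [ht.1], by linarith [ht.2]⟩
  have hx₀Ioo : x₀ ∈ Set.Ioo (x₀ - ε₀) (x₀ + ε₀) := ⟨by linarith, by linarith⟩
  -- Hölder bound for f on the interval
  obtain ⟨Q, hQ⟩ := Polynomial.X_sub_C_dvd_sub_C_eval (a := x₀) (p := S.p j)
  have hPQ : ∀ t : ℝ, (S.p j).eval t - (S.p j).eval x₀ = (t - x₀) * Q.eval t := by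
    intro t
    have h := congrArg (Polynomial.eval t) hQ
    simpa using h
  obtain ⟨MQ0, hMQ0⟩ := (isCompact_Icc (a := x₀ - δ) (b := x₀ + δ)).exists_bound_of_continuousOn
    Q.continuous.continuousOn
  set MP : ℝ := max MP0 0 with hMPdef
  set MQ : ℝ := max MQ0 0 with hMQdef
  set Mw : ℝ := |S.w x₀| + CH * δ ^ β with hMwdef
  have hMw : 0 ≤ Mw := by positivity
  have hwbd : ∀ t ∈ Set.Icc (x₀ - δ) (x₀ + δ), |S.w t| ≤ Mw := by
    intro t ht
    have h1 : |t - x₀| ≤ δ := abs_le.2 ⟨by linarith [ht.1], by linarith [ht.2]⟩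
    have h2 : |S.w t - S.w x₀| ≤ CH * |t - x₀| ^ β := hHo t (hsubIoo ht) x₀ hx₀Ioo
    have h3 : |t - x₀| ^ β ≤ δ ^ β := Real.rpow_le_rpow (abs_nonneg _) h1 (le_of_lt hβ)
    calc |S.w t| ≤ |S.w t - S.w x₀| + |S.w x₀| := by
          have := abs_add_le (S.w t - S.w x₀) (S.w x₀); simpa using this
      _ ≤ CH * δ ^ β + |S.w x₀| := by nlinarith
      _ = Mw := by rw [hMwdef]; ring
  set C' : ℝ := MQ * Mw * δ ^ (1 - β) + MP * CH with hC'def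
  have hC' : 0 ≤ C' := by positivity
  have hHf : ∀ t ∈ Set.Icc (x₀ - δ) (x₀ + δ), |f t - f x₀| ≤ C' * |t - x₀| ^ β := by
    intro t ht
    by_cases hne : t = x₀
    · subst hne; simp; positivity
    have habs : 0 < |t - x₀| := abs_pos.2 (sub_ne_zero.2 hne)
    have h1 : |t - x₀| ≤ δ := abs_le.2 ⟨by linarith [ht.1], by linarith [ht.2]⟩
    have hwt := hwbd t ht
    have hPt : |(S.p j).eval t - (S.p j).eval x₀| ≤ |t - x₀| * MQ := by
      rw [hPQ t, abs_mul]
      have := hMQ0 t ht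
      have hMQ' : |Q.eval t| ≤ MQ := le_trans (by simpa using this) (le_max_left _ _)
      exact mul_le_mul_of_nonneg_left hMQ' (abs_nonneg _)
    have hPx : |(S.p j).eval x₀| ≤ MP := by
      have hx₀K : x₀ ∈ S.Iset := hsubK ⟨by linarith, by linarith⟩
      exact le_trans (by simpa using hMP0 x₀ hx₀K) (le_max_left _ _)
    have hwdiff : |S.w t - S.w x₀| ≤ CH * |t - x₀| ^ β := hHo t (hsubIoo ht) x₀ hx₀Ioo
    have hsplitpow : |t - x₀| ≤ δ ^ (1 - β) * |t - x₀| ^ β := by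
      have h3 : |t - x₀| ^ (1 - β) ≤ δ ^ (1 - β) :=
        Real.rpow_le_rpow (abs_nonneg _) h1 (by linarith)
      calc |t - x₀| = |t - x₀| ^ β * |t - x₀| ^ (1 - β) := by
            rw [← Real.rpow_add habs]; norm_num
        _ ≤ |t - x₀| ^ β * δ ^ (1 - β) :=
            mul_le_mul_of_nonneg_left h3 (Real.rpow_nonneg (abs_nonneg _) β)
        _ = δ ^ (1 - β) * |t - x₀| ^ β := by ring
    have e : f t - f x₀
        = ((S.p j).eval t - (S.p j).eval x₀) * S.w t + (S.p j).eval x₀ * (S.w t - S.w x₀) := by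
      simp only [hfdef]; ring
    have hMQnn : (0:ℝ) ≤ MQ := le_max_right _ _
    have hMPnn : (0:ℝ) ≤ MP := le_max_right _ _
    calc |f t - f x₀|
        ≤ |((S.p j).eval t - (S.p j).eval x₀) * S.w t|
          + |(S.p j).eval x₀ * (S.w t - S.w x₀)| := by rw [e]; exact abs_add_le _ _
      _ = |(S.p j).eval t - (S.p j).eval x₀| * |S.w t|
          + |(S.p j).eval x₀| * |S.w t - S.w x₀| := by rw [abs_mul, abs_mul]
      _ ≤ (|t - x₀| * MQ) * Mw + MP * (CH * |t - x₀| ^ β) := by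
          refine add_le_add (mul_le_mul hPt hwt (abs_nonneg _) (by positivity)) ?_
          exact mul_le_mul hPx hwdiff (abs_nonneg _) hMPnn
      _ ≤ ((δ ^ (1 - β) * |t - x₀| ^ β) * MQ) * Mw + MP * (CH * |t - x₀| ^ β) := by
          have hstep := mul_le_mul_of_nonneg_right
            (mul_le_mul_of_nonneg_right hsplitpow hMQnn) hMw
          linarith
      _ = C' * |t - x₀| ^ β := by rw [hC'def]; ring
  -- apply the boundary-value lemma for σ = 1 and σ = -1
  have hbv1 := cauchy_bv S.Iset hK f hf x₀ δ C' β 1 hδ hC' hβ hsubK hHf (Or.inl rfl)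
  have hbv2 := cauchy_bv S.Iset hK f hf x₀ δ C' β (-1) hδ hC' hβ hsubK hHf (Or.inr rfl)
  set c : ℂ := (2 * (Real.pi : ℂ) * Complex.I)⁻¹ with hcdef
  set A : ℂ := ∫ t in S.Iset \ Set.Icc (x₀ - δ) (x₀ + δ), (f t : ℂ) / ((t : ℂ) - (x₀ : ℂ)) with hA
  set B : ℂ := ∫ t in Set.Icc (x₀ - δ) (x₀ + δ),
    ((f t : ℂ) - (f x₀ : ℂ)) / ((t : ℂ) - (x₀ : ℂ)) with hB
  set V1 : ℂ := A + B + (f x₀ : ℂ) * (Complex.log (δ : ℂ)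
    - ((Real.log δ : ℂ) - ((1 : ℝ) : ℂ) * (Real.pi : ℂ) * Complex.I)) with hV1
  set V2 : ℂ := A + B + (f x₀ : ℂ) * (Complex.log (δ : ℂ)
    - ((Real.log δ : ℂ) - ((-1 : ℝ) : ℂ) * (Real.pi : ℂ) * Complex.I)) with hV2
  refine ⟨c * V1, c * V2, ?_, ?_, ?_⟩
  · have h1 := hbv1.const_mul c
    refine h1.congr fun ε => ?_
    rw [OPSetup.q]
    have hzeq : ((x₀ : ℂ) + (ε : ℂ) * ((1 : ℝ) : ℂ) * Complex.I) = (x₀ : ℂ) + ε * Complex.I := by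
      push_cast; ring
    rw [hzeq]
  · have h2 := hbv2.const_mul c
    refine h2.congr fun ε => ?_
    rw [OPSetup.q]
    have hzeq : ((x₀ : ℂ) + (ε : ℂ) * ((-1 : ℝ) : ℂ) * Complex.I) = (x₀ : ℂ) - ε * Complex.I := by
      push_cast; ring
    rw [hzeq]
  · have h2πI : (2 * (Real.pi : ℂ) * Complex.I) ≠ 0 := by
      simp [Real.pi_ne_zero, Complex.I_ne_zero]
    have key : V1 = V2 + (f x₀ : ℂ) * (2 * (Real.pi : ℂ) * Complex.I) := by
      rw [hV1, hV2]; push_cast; ring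
    have hcv : c * ((f x₀ : ℂ) * (2 * (Real.pi : ℂ) * Complex.I)) = (f x₀ : ℂ) := by
      rw [hcdef]; field_simp
    have hfx : ((S.p j).eval x₀ * S.w x₀ : ℝ) = f x₀ := by simp [hfdef]
    rw [key, mul_add, hcv, hfx]

/-- **Jump relation of the Fokas–Its–Kitaev solution.** If `x₀` lies in the interior of `𝓘`
and `w` is Hölder continuous near `x₀`, then the boundary values `Y_±(x₀)` of `Y` from the
upper and lower half-planes exist and satisfy `Y₊(x₀) = Y₋(x₀)·[[1, w(x₀)],[0,1]]`. -/
theorem FIK_jump (S : OPSetup) (n : ℕ) (hn : 1 ≤ n) (x₀ : ℝ) (hx₀ : x₀ ∈ interior S.Iset)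
    (hHolder : ∃ (ε CH β : ℝ), 0 < ε ∧ 0 < CH ∧ 0 < β ∧ β ≤ 1 ∧
      ∀ x ∈ Set.Ioo (x₀ - ε) (x₀ + ε), ∀ y ∈ Set.Ioo (x₀ - ε) (x₀ + ε),
        |S.w x - S.w y| ≤ CH * |x - y| ^ β) :
    ∃ Yp Ym : M2,
      Tendsto (fun ε : ℝ => S.Y n ((x₀ : ℂ) + ε * Complex.I)) (𝓝[>] 0) (𝓝 Yp) ∧
      Tendsto (fun ε : ℝ => S.Y n ((x₀ : ℂ) - ε * Complex.I)) (𝓝[>] 0) (𝓝 Ym) ∧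
      Yp = Ym * !![1, (S.w x₀ : ℂ); 0, 1] := by
  obtain ⟨qpn, qmn, hqpn, hqmn, hjn⟩ := S.q_jump n x₀ hx₀ hHolder
  obtain ⟨qp1, qm1, hqp1, hqm1, hj1⟩ := S.q_jump (n - 1) x₀ hx₀ hHolder
  set c2 : ℂ := -(2 * (Real.pi : ℂ) * Complex.I / ((S.h (n - 1) : ℝ) : ℂ)) with hc2
  set Pn : ℂ := (((S.p n).eval x₀ : ℝ) : ℂ) with hPn
  set P1 : ℂ := (((S.p (n - 1)).eval x₀ : ℝ) : ℂ) with hP1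
  have hpath : ∀ cc : ℂ, Tendsto (fun ε : ℝ => (x₀ : ℂ) + (ε : ℂ) * cc) (𝓝[>] 0)
      (𝓝 (x₀ : ℂ)) := by
    intro cc
    have h : Continuous (fun ε : ℝ => (x₀ : ℂ) + (ε : ℂ) * cc) := by fun_prop
    have := (h.tendsto 0).mono_left (nhdsWithin_le_nhds (s := Set.Ioi (0 : ℝ)))
    simpa using this
  have hpoly : ∀ (m : ℕ) (cc : ℂ),
      Tendsto (fun ε : ℝ => (S.p m).eval₂ (algebraMap ℝ ℂ) ((x₀ : ℂ) + (ε : ℂ) * cc)) (𝓝[>] 0)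
        (𝓝 ((((S.p m).eval x₀ : ℝ) : ℂ))) := by
    intro m cc
    have hc : Continuous fun w : ℂ => (S.p m).eval₂ (algebraMap ℝ ℂ) w := by
      simpa [Polynomial.aeval_def] using (S.p m).continuous_aeval (A := ℂ)
    have h1 := (hc.tendsto ((x₀ : ℂ))).comp (hpath cc)
    have h2 : (S.p m).eval₂ (algebraMap ℝ ℂ) ((x₀ : ℂ))
        = (((S.p m).eval x₀ : ℝ) : ℂ) := by
      rw [show ((x₀ : ℝ) : ℂ) = algebraMap ℝ ℂ x₀ from rfl, Polynomial.eval₂_at_apply]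
      rfl
    rw [h2] at h1
    exact h1
  have hmineq : ∀ ε : ℝ, (x₀ : ℂ) - (ε : ℂ) * Complex.I = (x₀ : ℂ) + (ε : ℂ) * (-Complex.I) := by
    intro ε; ring
  refine ⟨!![Pn, qpn; c2 * P1, c2 * qp1], !![Pn, qmn; c2 * P1, c2 * qm1], ?_, ?_, ?_⟩
  · simp only [OPSetup.Y]
    exact tendsto_matrix2 (hpoly n Complex.I) hqpn ((hpoly (n - 1) Complex.I).const_mul c2)
      (hqp1.const_mul c2)
  · simp only [OPSetup.Y]
    have hm := tendsto_matrix2 (hpoly n (-Complex.I)) hqmn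
      ((hpoly (n - 1) (-Complex.I)).const_mul c2) (hqm1.const_mul c2)
    refine hm.congr fun ε => ?_
    rw [hmineq ε]
  · rw [Matrix.mul_fin_two]
    have hwn : qpn = Pn * ((S.w x₀ : ℝ) : ℂ) + qmn * 1 := by
      rw [hjn, hPn]; push_cast; ring
    have hw1 : c2 * qp1 = c2 * P1 * ((S.w x₀ : ℝ) : ℂ) + c2 * qm1 * 1 := by
      rw [hj1, hP1]; push_cast; ring
    rw [hwn, hw1]
    congr 1 <;> ring
end
end

section
/- Jump of the g-function (property g3): Let μ be a Borel probability measure on ℝ with compact support, let p := sup(supp μ), and define g(z) := ∫ log(z−s) dμ(s) for z ∈ ℂ∖(−∞, p], with the principal branch of the logarithm. Then for every x ∈ ℝ with μ({x}) = 0 and ∫ |log|x−s|| dμ(s) < ∞, the boundary values g_±(x) := lim_{ε→0⁺} g(x ± iε) exist and g₊(x) − g₋(x) = 2πi · μ((x, p]). -/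
open Complex Filter Topology MeasureTheory

noncomputable section

private lemma norm_clog_le (a b : ℝ) (ha : a ≠ 0) (hb : |b| ≤ 1) :
    ‖Complex.log ((a : ℂ) + (b : ℂ) * Complex.I)‖ ≤
      |Real.log (_root_.abs a)| + Real.log 2 + Real.pi := by
  set z : ℂ := (a : ℂ) + (b : ℂ) * Complex.I with hz
  have hre : z.re = a := by simp [hz]
  have him : z.im = b := by simp [hz]
  have hr : (0 : ℝ) < |a| := abs_pos.2 ha
  have h1 : |a| ≤ ‖z‖ := by
    have := Complex.abs_re_le_norm z
    rwa [hre] at this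
  have h2 : ‖z‖ ≤ |a| + 1 := by
    calc ‖z‖ ≤ |z.re| + |z.im| := Complex.norm_le_abs_re_add_abs_im z
      _ ≤ |a| + 1 := by rw [hre, him]; linarith
  have hlog1 : Real.log |a| ≤ Real.log (‖z‖) := Real.log_le_log hr h1
  have hmax : Real.log (max |a| 1) ≤ |Real.log (_root_.abs a)| := by
    rcases le_total |a| 1 with h | h
    · rw [max_eq_right h]; simp
    · rw [max_eq_left h]; exact le_abs_self _
  have hlog2 : Real.log (‖z‖) ≤ |Real.log (_root_.abs a)| + Real.log 2 := by
    have h3 : ‖z‖ ≤ 2 * max |a| 1 := by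
      rcases le_total |a| 1 with h | h
      · calc ‖z‖ ≤ |a| + 1 := h2
          _ ≤ 2 * max |a| 1 := by rw [max_eq_right h]; linarith
      · calc ‖z‖ ≤ |a| + 1 := h2
          _ ≤ 2 * max |a| 1 := by rw [max_eq_left h]; linarith
    calc Real.log (‖z‖) ≤ Real.log (2 * max |a| 1) :=
          Real.log_le_log (lt_of_lt_of_le hr h1) h3
      _ = Real.log 2 + Real.log (max |a| 1) :=
          Real.log_mul (by norm_num) (by positivity)
      _ ≤ Real.log 2 + |Real.log (_root_.abs a)| := by linarith
      _ = |Real.log (_root_.abs a)| + Real.log 2 := by ring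
  have habs : |Real.log (‖z‖)| ≤ |Real.log (_root_.abs a)| + Real.log 2 := by
    rw [abs_le]
    constructor
    · have h2pos : (0 : ℝ) ≤ Real.log 2 := Real.log_nonneg (by norm_num)
      have := neg_abs_le (Real.log |a|)
      linarith
    · exact hlog2
  calc ‖Complex.log z‖ ≤ |(Complex.log z).re| + |(Complex.log z).im| :=
        Complex.norm_le_abs_re_add_abs_im _
    _ = |Real.log (‖z‖)| + |Complex.arg z| := by rw [Complex.log_re, Complex.log_im]
    _ ≤ (|Real.log (_root_.abs a)| + Real.log 2) + Real.pi :=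
        add_le_add habs (Complex.abs_arg_le_pi z)

private lemma tendsto_point (c σ : ℝ) (hc : c ≠ 0) (hσ : σ = 1 ∨ σ = -1) :
    Tendsto (fun ε : ℝ => Complex.log ((c : ℂ) + ((σ * ε : ℝ) : ℂ) * Complex.I)) (𝓝[>] 0)
      (𝓝 (((Real.log |c| : ℝ) : ℂ) +
        (if 0 < c then 0 else (σ : ℂ) * Real.pi * Complex.I))) := by
  have htend : Tendsto (fun ε : ℝ => (c : ℂ) + ((σ * ε : ℝ) : ℂ) * Complex.I) (𝓝[>] 0)
      (𝓝 (c : ℂ)) := by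
    have hcont : Continuous fun ε : ℝ => (c : ℂ) + ((σ * ε : ℝ) : ℂ) * Complex.I := by
      fun_prop
    have h0 : Tendsto (fun ε : ℝ => (c : ℂ) + ((σ * ε : ℝ) : ℂ) * Complex.I) (𝓝 0)
        (𝓝 (c : ℂ)) := by simpa using hcont.tendsto 0
    exact h0.mono_left nhdsWithin_le_nhds
  rcases hc.lt_or_gt with hcneg | hcpos
  · -- c < 0
    have hre : ((c : ℂ)).re < 0 := by simpa using hcneg
    have him : ((c : ℂ)).im = 0 := by simp
    rw [if_neg (not_lt.2 hcneg.le)]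
    rcases hσ with rfl | rfl
    · have hmem : ∀ᶠ ε in 𝓝[>] (0 : ℝ),
          ((c : ℂ) + ((1 * ε : ℝ) : ℂ) * Complex.I) ∈ {z : ℂ | 0 ≤ z.im} := by
        filter_upwards [self_mem_nhdsWithin] with ε hε
        have : (0 : ℝ) < ε := hε
        simp only [Set.mem_setOf_eq, Complex.add_im, Complex.ofReal_im, Complex.mul_im,
          Complex.ofReal_re, Complex.I_im, Complex.I_re]
        nlinarith
      have hz : Tendsto (fun ε : ℝ => (c : ℂ) + ((1 * ε : ℝ) : ℂ) * Complex.I) (𝓝[>] 0)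
          (𝓝[{z : ℂ | 0 ≤ z.im}] (c : ℂ)) := tendsto_nhdsWithin_iff.mpr ⟨htend, hmem⟩
      have := (Complex.tendsto_log_nhdsWithin_im_nonneg_of_re_neg_of_im_zero hre him).comp hz
      have habs : ‖(c : ℂ)‖ = |c| := (Complex.norm_real c).trans (Real.norm_eq_abs c)
      simpa [habs, Function.comp_def] using this
    · have hmem : ∀ᶠ ε in 𝓝[>] (0 : ℝ),
          ((c : ℂ) + (((-1) * ε : ℝ) : ℂ) * Complex.I) ∈ {z : ℂ | z.im < 0} := by
        filter_upwards [self_mem_nhdsWithin] with ε hε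
        have : (0 : ℝ) < ε := hε
        simp only [Set.mem_setOf_eq, Complex.add_im, Complex.ofReal_im, Complex.mul_im,
          Complex.ofReal_re, Complex.I_im, Complex.I_re]
        nlinarith
      have hz : Tendsto (fun ε : ℝ => (c : ℂ) + (((-1) * ε : ℝ) : ℂ) * Complex.I) (𝓝[>] 0)
          (𝓝[{z : ℂ | z.im < 0}] (c : ℂ)) := tendsto_nhdsWithin_iff.mpr ⟨htend, hmem⟩
      have := (Complex.tendsto_log_nhdsWithin_im_neg_of_re_neg_of_im_zero hre him).comp hz
      have habs : ‖(c : ℂ)‖ = |c| := (Complex.norm_real c).trans (Real.norm_eq_abs c)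
      have heq : ((Real.log |c| : ℝ) : ℂ) + ((-1 : ℝ) : ℂ) * Real.pi * Complex.I =
          (Real.log (‖(c : ℂ)‖) : ℂ) - Real.pi * Complex.I := by
        rw [habs]; push_cast; ring
      rw [heq]
      exact this
  · -- 0 < c
    rw [if_pos hcpos]
    have hca : ContinuousAt Complex.log (c : ℂ) :=
      continuousAt_clog (Or.inl (by simpa using hcpos))
    have := hca.tendsto.comp htend
    have heq : ((Real.log |c| : ℝ) : ℂ) + 0 = Complex.log (c : ℂ) := by
      rw [add_zero, abs_of_pos hcpos, Complex.ofReal_log hcpos.le]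
    rw [heq]
    exact this

private lemma tendsto_int (μ : Measure ℝ) [IsProbabilityMeasure μ] (x : ℝ)
    (hx_atom : μ {x} = 0)
    (hx_log : Integrable (fun s : ℝ => |Real.log (_root_.abs (x - s))|) μ)
    (σ : ℝ) (hσ : σ = 1 ∨ σ = -1) :
    Tendsto (fun ε : ℝ => ∫ s : ℝ, Complex.log ((x : ℂ) + ((σ * ε : ℝ) : ℂ) * Complex.I - s) ∂μ)
      (𝓝[>] 0)
      (𝓝 (∫ s : ℝ, (((Real.log |x - s| : ℝ) : ℂ) +
        Set.indicator (Set.Ioi x) (fun _ => (σ : ℂ) * Real.pi * Complex.I) s) ∂μ)) := by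
  have hσabs : |σ| = 1 := by rcases hσ with rfl | rfl <;> norm_num
  have hne : ∀ᵐ s ∂μ, s ≠ x := by
    rw [ae_iff]
    simpa using hx_atom
  apply tendsto_integral_filter_of_dominated_convergence
    (bound := fun s => |Real.log (_root_.abs (x - s))| + Real.log 2 + Real.pi)
  · exact Eventually.of_forall fun ε =>
      (Complex.measurable_log.comp
        (measurable_const.sub Complex.measurable_ofReal)).aestronglyMeasurable
  · filter_upwards [Ioc_mem_nhdsGT one_pos] with ε hε
    filter_upwards [hne] with s hs
    have h1 : (x : ℂ) + ((σ * ε : ℝ) : ℂ) * Complex.I - s =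
        ((x - s : ℝ) : ℂ) + ((σ * ε : ℝ) : ℂ) * Complex.I := by push_cast; ring
    rw [h1]
    exact norm_clog_le _ _ (sub_ne_zero.2 hs.symm)
      (by rw [abs_mul, hσabs, one_mul, abs_of_pos hε.1]; exact hε.2)
  · exact (hx_log.add (integrable_const _)).add (integrable_const _)
  · filter_upwards [hne] with s hs
    have h1 : ∀ ε : ℝ, (x : ℂ) + ((σ * ε : ℝ) : ℂ) * Complex.I - s =
        ((x - s : ℝ) : ℂ) + ((σ * ε : ℝ) : ℂ) * Complex.I := by
      intro ε; push_cast; ring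
    simp only [h1]
    have hpt := tendsto_point (x - s) σ (sub_ne_zero.2 hs.symm) hσ
    rcases (sub_ne_zero.2 hs.symm).lt_or_gt with hc | hc
    · -- x - s < 0, i.e. x < s, s ∈ Ioi x
      rw [Set.indicator_of_mem (by simpa using sub_neg.mp hc)]
      rw [if_neg (not_lt.2 hc.le)] at hpt
      exact hpt
    · rw [Set.indicator_of_notMem (by simp [not_lt.2 (sub_pos.mp hc).le])]
      rw [if_pos hc] at hpt
      exact hpt

/-- **Jump of the g-function (property g3).** Let `μ` be a compactly supported Borel
probability measure on `ℝ`, let `p = sup (supp μ)`, and let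
`g(z) = ∫ log(z−s) dμ(s)` with the principal branch of the logarithm (analytic on
`ℂ∖(−∞,p]`).  Then for every `x ∈ ℝ` with `μ({x}) = 0` and `∫ |log|x−s|| dμ(s) < ∞`, the
boundary values `g_±(x)` from above and below exist and
`g₊(x) − g₋(x) = 2πi·μ((x,p])`. -/
theorem g_function_jump (μ : Measure ℝ) [IsProbabilityMeasure μ]
    (hcpt : ∃ a b : ℝ, μ (Set.Icc a b)ᶜ = 0)
    (p : ℝ) (hp_sup : ∀ ε > 0, 0 < μ (Set.Ioc (p - ε) p)) (hp_null : μ (Set.Ioi p) = 0)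
    (g : ℂ → ℂ) (hg : ∀ z : ℂ, g z = ∫ s : ℝ, Complex.log (z - (s : ℂ)) ∂μ)
    (x : ℝ) (hx_atom : μ {x} = 0)
    (hx_log : Integrable (fun s : ℝ => |Real.log (_root_.abs (x - s))|) μ) :
    ∃ gp gm : ℂ,
      Tendsto (fun ε : ℝ => g ((x : ℂ) + ε * Complex.I)) (𝓝[>] 0) (𝓝 gp) ∧
      Tendsto (fun ε : ℝ => g ((x : ℂ) - ε * Complex.I)) (𝓝[>] 0) (𝓝 gm) ∧
      gp - gm = 2 * (Real.pi : ℂ) * Complex.I * ((μ (Set.Ioc x p)).toReal : ℂ) := by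
  have limP := tendsto_int μ x hx_atom hx_log 1 (Or.inl rfl)
  have limM := tendsto_int μ x hx_atom hx_log (-1) (Or.inr rfl)
  -- integrability of the pieces
  have hlog_meas : AEStronglyMeasurable (fun s : ℝ => Real.log |x - s|) μ :=
    (Real.measurable_log.comp
      ((continuous_const.sub continuous_id).abs.measurable)).aestronglyMeasurable
  have hlog_int : Integrable (fun s : ℝ => Real.log |x - s|) μ :=
    hx_log.mono' hlog_meas (Eventually.of_forall fun s => by
      simp [Real.norm_eq_abs])
  have hP_int : Integrable (fun s : ℝ => ((Real.log |x - s| : ℝ) : ℂ) +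
      Set.indicator (Set.Ioi x) (fun _ => ((1 : ℝ) : ℂ) * Real.pi * Complex.I) s) μ :=
    hlog_int.ofReal.add ((integrable_const _).indicator measurableSet_Ioi)
  have hM_int : Integrable (fun s : ℝ => ((Real.log |x - s| : ℝ) : ℂ) +
      Set.indicator (Set.Ioi x) (fun _ => ((-1 : ℝ) : ℂ) * Real.pi * Complex.I) s) μ :=
    hlog_int.ofReal.add ((integrable_const _).indicator measurableSet_Ioi)
  refine ⟨∫ s : ℝ, (((Real.log |x - s| : ℝ) : ℂ) +
      Set.indicator (Set.Ioi x) (fun _ => ((1 : ℝ) : ℂ) * Real.pi * Complex.I) s) ∂μ,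
    ∫ s : ℝ, (((Real.log |x - s| : ℝ) : ℂ) +
      Set.indicator (Set.Ioi x) (fun _ => ((-1 : ℝ) : ℂ) * Real.pi * Complex.I) s) ∂μ,
    ?_, ?_, ?_⟩
  · -- plus side
    have heq : (fun ε : ℝ => g ((x : ℂ) + ε * Complex.I)) =
        fun ε : ℝ => ∫ s : ℝ, Complex.log ((x : ℂ) + (((1 : ℝ) * ε : ℝ) : ℂ) * Complex.I - s) ∂μ := by
      funext ε
      rw [hg]
      congr 1
      funext s
      congr 1
      push_cast
      ring
    rw [heq]
    exact limP
  · have heq : (fun ε : ℝ => g ((x : ℂ) - ε * Complex.I)) =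
        fun ε : ℝ => ∫ s : ℝ, Complex.log ((x : ℂ) + ((((-1) : ℝ) * ε : ℝ) : ℂ) * Complex.I - s) ∂μ := by
      funext ε
      rw [hg]
      congr 1
      funext s
      congr 1
      push_cast
      ring
    rw [heq]
    exact limM
  · -- the jump
    rw [← integral_sub hP_int hM_int]
    have hint_eq : (fun s : ℝ =>
        (((Real.log |x - s| : ℝ) : ℂ) +
          Set.indicator (Set.Ioi x) (fun _ => ((1 : ℝ) : ℂ) * Real.pi * Complex.I) s) -
        (((Real.log |x - s| : ℝ) : ℂ) +
          Set.indicator (Set.Ioi x) (fun _ => ((-1 : ℝ) : ℂ) * Real.pi * Complex.I) s)) =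
        fun s : ℝ => Set.indicator (Set.Ioi x)
          (fun _ => 2 * (Real.pi : ℂ) * Complex.I) s := by
      funext s
      by_cases hsx : s ∈ Set.Ioi x
      · simp only [Set.indicator_of_mem hsx]
        push_cast
        ring
      · simp only [Set.indicator_of_notMem hsx]
        ring
    rw [hint_eq, integral_indicator_const _ measurableSet_Ioi]
    have hmeq : μ (Set.Ioi x) = μ (Set.Ioc x p) := by
      refine le_antisymm ?_ (measure_mono Set.Ioc_subset_Ioi_self)
      calc μ (Set.Ioi x) ≤ μ (Set.Ioc x p ∪ Set.Ioi p) := by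
            refine measure_mono fun s hs => ?_
            rcases le_or_gt s p with h | h
            · exact Or.inl ⟨hs, h⟩
            · exact Or.inr h
        _ ≤ μ (Set.Ioc x p) + μ (Set.Ioi p) := measure_union_le _ _
        _ = μ (Set.Ioc x p) := by rw [hp_null, add_zero]
    rw [measureReal_def, hmeq, Complex.real_smul]
    ring

end
end
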